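/- Let X = (X_1, ..., X_n) be random variables on a finite vocabulary V (n > 1, |V| ≥ 2) with joint PMF p and marginals p_j satisfying p_j(x*_j) > 1 - ε for all j with 0 < ε ≤ 1/2, and let q = ∏_j p_j. Then KL(p ‖ q) < (n - 1) · (H_b(ε) + ε ln(|V| - 1)). -/

import Mathlib

open scoped BigOperators Classical

/-- Marginal of the `j`-th coordinate of a joint PMF `p` on `V^n`. -/
noncomputable def margCoord {V : Type*} [Fintype V] {n : ℕ}
    (p : (Fin n → V) → ℝ) (j : Fin n) (v : V) : ℝ :=
  ∑ z : Fin n → V, if z j = v then p z else 0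

/-- Kullback–Leibler divergence (in nats) between finitely supported
distributions. -/
noncomputable def klDiv' {A : Type*} [Fintype A] (f g : A → ℝ) : ℝ :=
  ∑ a : A, f a * Real.log (f a / g a)

/- Max-entropy bound on a finset: if `f ≥ 0` on `s` with total mass `δ`, then
`∑ negMulLog (f v) ≤ δ log |s| - δ log δ`. -/
lemma sum_negMulLog_le_aux {V : Type*} (s : Finset V) (f : V → ℝ)
    (hf0 : ∀ v ∈ s, 0 ≤ f v) :
    ∑ v ∈ s, Real.negMulLog (f v) ≤
      (∑ v ∈ s, f v) * Real.log s.card - (∑ v ∈ s, f v) * Real.log (∑ v ∈ s, f v) := by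
  set δ := ∑ v ∈ s, f v with hδ
  have hδ0 : 0 ≤ δ := Finset.sum_nonneg hf0
  rcases hδ0.eq_or_lt with h0 | hpos
  · have hz : ∀ v ∈ s, f v = 0 := by
      intro v hv
      exact (Finset.sum_eq_zero_iff_of_nonneg hf0).1 h0.symm v hv
    have : ∑ v ∈ s, Real.negMulLog (f v) = 0 := by
      apply Finset.sum_eq_zero
      intro v hv; rw [hz v hv]; simp
    rw [this, ← h0]; simp
  · have hsne : s.Nonempty := by
      by_contra h
      rw [Finset.not_nonempty_iff_eq_empty] at h
      rw [hδ, h] at hpos; simp at hpos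
    have hcard : (0 : ℝ) < s.card := by
      exact_mod_cast Finset.card_pos.2 hsne
    have key : ∑ v ∈ s, (Real.negMulLog (f v) + f v * (Real.log δ - Real.log s.card))
        ≤ ∑ v ∈ s, (δ / s.card - f v) := by
      apply Finset.sum_le_sum
      intro v hv
      rcases (hf0 v hv).eq_or_lt with hfz | hfpos
      · rw [← hfz]
        simp only [Real.negMulLog_zero, zero_mul, add_zero, sub_zero]
        positivity
      · have h1 : Real.negMulLog (f v) + f v * (Real.log δ - Real.log (s.card : ℝ))
            = f v * Real.log (δ / ((s.card : ℝ) * f v)) := by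
          rw [Real.log_div (ne_of_gt hpos) (by positivity),
            Real.log_mul (ne_of_gt hcard) (ne_of_gt hfpos), Real.negMulLog]
          ring
        rw [h1]
        have h2 : Real.log (δ / ((s.card : ℝ) * f v)) ≤ δ / ((s.card : ℝ) * f v) - 1 :=
          Real.log_le_sub_one_of_pos (by positivity)
        calc f v * Real.log (δ / ((s.card : ℝ) * f v))
            ≤ f v * (δ / ((s.card : ℝ) * f v) - 1) :=
              mul_le_mul_of_nonneg_left h2 hfpos.le
          _ = δ / s.card - f v := by field_simp
    have hsum : ∑ v ∈ s, (δ / s.card - f v) = 0 := by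
      rw [Finset.sum_sub_distrib, Finset.sum_const, ← hδ]
      field_simp
      rw [nsmul_eq_mul, mul_div_assoc', mul_comm, mul_div_assoc, div_self (ne_of_gt hcard), mul_one, sub_self]
    rw [Finset.sum_add_distrib, ← Finset.sum_mul, ← hδ, hsum] at key
    nlinarith [key]

/-- Fano-type bound: entropy of a distribution on `V` is at most
`qaryEntropy |V| (1 - f x)`. -/
lemma entropy_le_qary {V : Type*} [Fintype V] (hcard : 2 ≤ Fintype.card V)
    (f : V → ℝ) (x : V) (hf0 : ∀ v, 0 ≤ f v) (hf1 : ∑ v : V, f v = 1) :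
    ∑ v : V, Real.negMulLog (f v) ≤ Real.qaryEntropy (Fintype.card V) (1 - f x) := by
  classical
  set s : Finset V := Finset.univ.erase x with hs
  have hmem : x ∈ (Finset.univ : Finset V) := Finset.mem_univ x
  have hsplit : f x + ∑ v ∈ s, f v = 1 := by
    rw [hs, Finset.add_sum_erase _ f hmem, hf1]
  have hδ : ∑ v ∈ s, f v = 1 - f x := by linarith
  have hcards : (s.card : ℝ) = (Fintype.card V : ℝ) - 1 := by
    rw [hs, Finset.card_erase_of_mem hmem, Finset.card_univ]
    have : 1 ≤ Fintype.card V := by omega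
    push_cast [Nat.cast_sub this]
    ring
  have hmain := sum_negMulLog_le_aux s f (fun v _ => hf0 v)
  rw [hδ, hcards] at hmain
  have hEsplit : ∑ v : V, Real.negMulLog (f v)
      = Real.negMulLog (f x) + ∑ v ∈ s, Real.negMulLog (f v) := by
    rw [hs]
    exact (Finset.add_sum_erase Finset.univ (fun v => Real.negMulLog (f v)) hmem).symm
  have hq : Real.qaryEntropy (Fintype.card V) (1 - f x)
      = Real.negMulLog (f x) + ((1 - f x) * Real.log ((Fintype.card V : ℝ) - 1)
        - (1 - f x) * Real.log (1 - f x)) := by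
    rw [Real.qaryEntropy, Real.binEntropy_eq_negMulLog_add_negMulLog_one_sub]
    have : (1 : ℝ) - (1 - f x) = f x := by ring
    rw [this, Real.negMulLog]
    push_cast
    ring
  rw [hEsplit, hq]
  linarith [hmain]

theorem stmt_10 {V : Type*} [Fintype V] {n : ℕ} (hn : 1 < n)
    (hcard : 2 ≤ Fintype.card V)
    (p : (Fin n → V) → ℝ) (x' : Fin n → V) (ε : ℝ)
    (hp0 : ∀ z, 0 ≤ p z) (hp1 : ∑ z : Fin n → V, p z = 1)
    (hconf : ∀ j, margCoord p j (x' j) > 1 - ε)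
    (hε : 0 < ε) (hε2 : ε ≤ 1 / 2) :
    klDiv' p (fun z => ∏ j, margCoord p j (z j)) <
      ((n : ℝ) - 1) *
        ((-(ε * Real.log ε) - (1 - ε) * Real.log (1 - ε)) +
          ε * Real.log ((Fintype.card V : ℝ) - 1)) := by
  classical
  set M := Fintype.card V with hM
  set m : Fin n → V → ℝ := fun j v => margCoord p j v with hm
  -- basic facts about marginals
  have hm0 : ∀ j v, 0 ≤ m j v := by
    intro j v
    apply Finset.sum_nonneg
    intro z _
    split <;> [exact hp0 z; exact le_rfl]
  have hm1 : ∀ j, ∑ v : V, m j v = 1 := by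
    intro j
    rw [show ∑ v : V, m j v = ∑ v : V, ∑ z : Fin n → V, if z j = v then p z else 0 from rfl,
      Finset.sum_comm]
    rw [← hp1]
    apply Finset.sum_congr rfl
    intro z _
    rw [Finset.sum_ite_eq]
    simp
  have hple : ∀ (j : Fin n) (z : Fin n → V), p z ≤ m j (z j) := by
    intro j z
    have := Finset.single_le_sum (f := fun w : Fin n → V => if w j = z j then p w else 0)
      (fun w _ => by split <;> [exact hp0 w; exact le_rfl]) (Finset.mem_univ z)
    simp at this; exact this
  -- fiberwise sum identity
  have hfiber : ∀ (j : Fin n) (g : V → ℝ),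
      ∑ z : Fin n → V, p z * g (z j) = ∑ v : V, m j v * g v := by
    intro j g
    have : ∑ v : V, m j v * g v
        = ∑ v : V, ∑ z : Fin n → V, (if z j = v then p z * g v else 0) := by
      apply Finset.sum_congr rfl
      intro v _
      simp only [hm, margCoord]
      rw [Finset.sum_mul]
      apply Finset.sum_congr rfl
      intro z _
      split <;> simp
    rw [this, Finset.sum_comm]
    apply Finset.sum_congr rfl
    intro z _
    have : ∑ v : V, (if z j = v then p z * g v else 0)
        = if z j ∈ Finset.univ then p z * g (z j) else 0 := by
      rw [Finset.sum_ite_eq]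
    simpa using this
  -- entropies
  set Hp : ℝ := ∑ z : Fin n → V, Real.negMulLog (p z) with hHp
  set Hq : Fin n → ℝ := fun j => ∑ v : V, Real.negMulLog (m j v) with hHq
  -- Step 1: KL = ∑ Hq - Hp
  have hKL : klDiv' p (fun z => ∏ j, margCoord p j (z j)) = (∑ j, Hq j) - Hp := by
    have hterm : ∀ z : Fin n → V,
        p z * Real.log (p z / ∏ j, m j (z j))
          = -(Real.negMulLog (p z)) - ∑ j, p z * Real.log (m j (z j)) := by
      intro z
      rcases (hp0 z).eq_or_lt with hz | hz
      · rw [← hz]; simp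
      · have hfac : ∀ j : Fin n, 0 < m j (z j) := fun j => lt_of_lt_of_le hz (hple j z)
        have hq : (0 : ℝ) < ∏ j, m j (z j) := Finset.prod_pos fun j _ => hfac j
        rw [Real.log_div (ne_of_gt hz) (ne_of_gt hq),
          Real.log_prod (fun j _ => ne_of_gt (hfac j))]
        simp only [Real.negMulLog, mul_sub, Finset.mul_sum]
        ring
    simp only [klDiv']
    show (∑ z : Fin n → V, p z * Real.log (p z / ∏ j, m j (z j))) = _
    rw [Finset.sum_congr rfl (fun z _ => hterm z), Finset.sum_sub_distrib]
    have h1 : ∑ z : Fin n → V, -(Real.negMulLog (p z)) = -Hp := by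
      rw [hHp, Finset.sum_neg_distrib]
    have h2 : ∑ z : Fin n → V, ∑ j, p z * Real.log (m j (z j)) = -∑ j, Hq j := by
      rw [Finset.sum_comm]
      rw [← Finset.sum_neg_distrib]
      apply Finset.sum_congr rfl
      intro j _
      rw [hfiber j (fun v => Real.log (m j v)), hHq]
      rw [← Finset.sum_neg_distrib]
      apply Finset.sum_congr rfl
      intro v _
      rw [Real.negMulLog]
      ring
    rw [h1, h2]
    ring
  -- Step 2: Hq j0 ≤ Hp
  set j0 : Fin n := ⟨0, by omega⟩ with hj0
  have hHpge : Hq j0 ≤ Hp := by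
    have hterm : ∀ z : Fin n → V,
        -(p z * Real.log (m j0 (z j0))) ≤ Real.negMulLog (p z) := by
      intro z
      rcases (hp0 z).eq_or_lt with hz | hz
      · rw [← hz]; simp
      · rw [Real.negMulLog, neg_mul]
        apply neg_le_neg
        exact mul_le_mul_of_nonneg_left (Real.log_le_log hz (hple j0 z)) hz.le
    calc Hq j0 = ∑ v : V, m j0 v * (-(Real.log (m j0 v))) := by
          simp only [hHq]
          apply Finset.sum_congr rfl
          intro v _
          rw [Real.negMulLog]
          ring
      _ = ∑ z : Fin n → V, p z * (-(Real.log (m j0 (z j0)))) :=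
          (hfiber j0 (fun v => -(Real.log (m j0 v)))).symm
      _ ≤ Hp := Finset.sum_le_sum fun z _ => by rw [mul_neg]; exact hterm z
  -- Step 3: each Hq j < C
  set C : ℝ := (-(ε * Real.log ε) - (1 - ε) * Real.log (1 - ε)) +
      ε * Real.log ((M : ℝ) - 1) with hC
  have hCq : C = Real.qaryEntropy M ε := by
    rw [hC, Real.qaryEntropy, Real.binEntropy]
    rw [Real.log_inv, Real.log_inv]
    push_cast
    ring
  have hεIcc : ε ∈ Set.Icc (0 : ℝ) (1 - 1 / (M : ℝ)) := by
    constructor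
    · exact hε.le
    · have hM2 : (2 : ℝ) ≤ (M : ℝ) := by exact_mod_cast hcard
      have : 1 / (M : ℝ) ≤ 1 / 2 := by
        apply one_div_le_one_div_of_le <;> linarith
      linarith
  have hHqlt : ∀ j, Hq j < C := by
    intro j
    have hle := entropy_le_qary hcard (m j) (x' j) (hm0 j) (hm1 j)
    have hδε : 1 - m j (x' j) < ε := by
      have := hconf j
      simp only [hm] at *
      linarith [this]
    have hδ0 : 0 ≤ 1 - m j (x' j) := by
      have : m j (x' j) ≤ 1 := by
        rw [← hm1 j]
        exact Finset.single_le_sum (fun v _ => hm0 j v) (Finset.mem_univ (x' j))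
      linarith
    have hδIcc : 1 - m j (x' j) ∈ Set.Icc (0 : ℝ) (1 - 1 / (M : ℝ)) := by
      constructor
      · exact hδ0
      · exact le_trans (le_of_lt hδε) hεIcc.2
    have hmono := Real.qaryEntropy_strictMonoOn hcard hδIcc hεIcc hδε
    rw [hCq]
    exact lt_of_le_of_lt hle hmono
  -- Step 4: combine
  rw [hKL]
  have hsplit : ∑ j, Hq j = (∑ j ∈ Finset.univ.erase j0, Hq j) + Hq j0 :=
    (Finset.sum_erase_add _ _ (Finset.mem_univ j0)).symm
  have hcarde : (Finset.univ.erase j0).card = n - 1 := by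
    rw [Finset.card_erase_of_mem (Finset.mem_univ j0), Finset.card_univ, Fintype.card_fin]
  have hne : (Finset.univ.erase j0).Nonempty := by
    rw [← Finset.card_pos, hcarde]
    omega
  have hlt : ∑ j ∈ Finset.univ.erase j0, Hq j < ∑ j ∈ Finset.univ.erase j0, C :=
    Finset.sum_lt_sum_of_nonempty hne fun j _ => hHqlt j
  have hconst : ∑ j ∈ Finset.univ.erase j0, C = ((n : ℝ) - 1) * C := by
    rw [Finset.sum_const, hcarde, nsmul_eq_mul]
    congr 1
    push_cast [Nat.cast_sub (le_of_lt hn)]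
    ring
  calc (∑ j, Hq j) - Hp ≤ (∑ j, Hq j) - Hq j0 := by linarith
    _ = ∑ j ∈ Finset.univ.erase j0, Hq j := by rw [hsplit]; ring
    _ < ((n : ℝ) - 1) * C := by rw [← hconst]; exact hlt
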